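/- Let p be a prime, let A be a θ^p-ring, let e ≥ 1, and let a ∈ A satisfy p^e·a = 0. Then a^{p^e+p^{e−1}} = 0. -/

import Mathlib

/-- A `θ^p`-ring: a commutative ring `A` equipped with maps `θ ψ : A → A` such that
`ψ` is a ring homomorphism, `ψ a = a^p - p * θ a`, and `θ` satisfies the usual
identities of a `p`-typical `δ`-structure. -/
structure IsThetaRing (p : ℕ) {A : Type*} [CommRing A] (θ ψ : A → A) : Prop where
  psi_one : ψ 1 = 1
  psi_add : ∀ a b : A, ψ (a + b) = ψ a + ψ b
  psi_mul : ∀ a b : A, ψ (a * b) = ψ a * ψ b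
  psi_def : ∀ a : A, ψ a = a ^ p - (p : A) * θ a
  theta_one : θ 1 = 0
  theta_add : ∀ a b : A, θ (a + b) = θ a + θ b +
    ∑ j ∈ Finset.Ioo 0 p, ((p.choose j / p : ℕ) : A) * a ^ j * b ^ (p - j)
  theta_mul : ∀ a b : A, θ (a * b) = θ a * ψ b + a ^ p * θ b
  theta_psi : ∀ a : A, θ (ψ a) = ψ (θ a)


section Aux

variable {p : ℕ} {A : Type*} [CommRing A] {θ ψ : A → A}

lemma psi_zero' (h : IsThetaRing p θ ψ) : ψ (0 : A) = 0 := by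
  have h0 : ψ ((0 : A) + 0) = ψ 0 + ψ 0 := h.psi_add 0 0
  rw [add_zero] at h0
  exact (left_eq_add.mp h0)

lemma theta_zero' (hp : p.Prime) (h : IsThetaRing p θ ψ) : θ (0 : A) = 0 := by
  have h0 := h.theta_mul 0 0
  rw [mul_zero, psi_zero' h, mul_zero, zero_pow hp.pos.ne', zero_mul, add_zero] at h0
  exact h0

lemma psi_pow' (h : IsThetaRing p θ ψ) (a : A) (n : ℕ) : ψ (a ^ n) = (ψ a) ^ n := by
  induction n with
  | zero => simpa using h.psi_one
  | succ n ih => rw [pow_succ, h.psi_mul, ih, pow_succ]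

lemma nat_theta' (hp : p.Prime) (h : IsThetaRing p θ ψ) (n : ℕ) :
    ∃ m : ℕ, n ^ p = n + p * m ∧ θ ((n : A)) = (m : A) := by
  induction n with
  | zero =>
    refine ⟨0, by simp [zero_pow hp.pos.ne'], by simpa using theta_zero' hp h⟩
  | succ n ih =>
    obtain ⟨m, hm1, hm2⟩ := ih
    refine ⟨m + ∑ j ∈ Finset.Ioo 0 p, (p.choose j / p) * n ^ j, ?_, ?_⟩
    · have hbin : (n + 1) ^ p = n ^ p + (∑ j ∈ Finset.Ioo 0 p, p.choose j * n ^ j) + 1 := by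
        rw [add_pow, Finset.sum_range_succ]
        have hr : Finset.range p = insert 0 (Finset.Ioo 0 p) := by
          rw [Finset.range_eq_Ico, ← Finset.Ioo_insert_left hp.pos]
        rw [hr, Finset.sum_insert (by simp)]
        simp only [Nat.choose_self, Nat.choose_zero_right, one_pow, mul_one, pow_zero, one_mul]
        push_cast
        rw [Finset.sum_congr rfl (fun j _ => mul_comm (n ^ j) (p.choose j))]
        ring
      have hdiv : ∑ j ∈ Finset.Ioo 0 p, p.choose j * n ^ j
          = p * ∑ j ∈ Finset.Ioo 0 p, (p.choose j / p) * n ^ j := by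
        rw [Finset.mul_sum]
        refine Finset.sum_congr rfl fun j hj => ?_
        obtain ⟨h1, h2⟩ := Finset.mem_Ioo.mp hj
        rw [← mul_assoc, Nat.mul_div_cancel' (hp.dvd_choose_self h1.ne' h2)]
      calc (n + 1) ^ p = n ^ p + (∑ j ∈ Finset.Ioo 0 p, p.choose j * n ^ j) + 1 := hbin
        _ = (n + p * m) + (p * ∑ j ∈ Finset.Ioo 0 p, (p.choose j / p) * n ^ j) + 1 := by
            rw [hm1, hdiv]
        _ = (n + 1) + p * (m + ∑ j ∈ Finset.Ioo 0 p, (p.choose j / p) * n ^ j) := by ring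
    · have hc : ((n + 1 : ℕ) : A) = (n : A) + 1 := by push_cast; ring
      rw [hc, h.theta_add, hm2, h.theta_one, add_zero]
      push_cast
      simp [one_pow]

end Aux

section Aux2

variable {p : ℕ} {A : Type*} [CommRing A] {θ ψ : A → A}

lemma rel' (hp : p.Prime) (h : IsThetaRing p θ ψ) {f : ℕ} (hf : 1 ≤ f) (x : A)
    (hx : (p : A) ^ f * x = 0) : (p : A) ^ f * θ x = (p : A) ^ (f - 1) * x ^ p := by
  obtain ⟨m, hm1, hm2⟩ := nat_theta' hp h (p ^ f) (A := A)
  have hp2 := hp.two_le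
  have hfp : f * 2 ≤ f * p := Nat.mul_le_mul_left f hp2
  have hmm : m + p ^ (f - 1) = p ^ (f * p - 1) := by
    apply Nat.eq_of_mul_eq_mul_left hp.pos
    have h1 : p * p ^ (f - 1) = p ^ f := by
      rw [← pow_succ']; congr 1; omega
    have h2 : p * p ^ (f * p - 1) = p ^ (f * p) := by
      rw [← pow_succ']; congr 1; omega
    have h3 : p ^ (f * p) = p ^ f + p * m := by rw [pow_mul]; exact hm1
    rw [Nat.mul_add, h1, h2, h3]
    exact Nat.add_comm _ _
  have hbig : (p : A) ^ (f * p - 1) * x ^ p = 0 := by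
    have e1 : (p : A) ^ (f * p - 1) = (p : A) ^ f * (p : A) ^ (f * p - 1 - f) := by
      rw [← pow_add]; congr 1; omega
    have e2 : x ^ p = x * x ^ (p - 1) := by
      rw [← pow_succ']; congr 1; omega
    calc (p : A) ^ (f * p - 1) * x ^ p
        = ((p : A) ^ (f * p - 1 - f) * x ^ (p - 1)) * ((p : A) ^ f * x) := by
          rw [e1, e2]; ring
      _ = 0 := by rw [hx, mul_zero]
  have hcast : ((p ^ f : ℕ) : A) = (p : A) ^ f := by push_cast; ring
  have hθc : θ ((p : A) ^ f) = (m : A) := by rw [← hcast]; exact hm2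
  have h0 : (m : A) * (x ^ p - (p : A) * θ x) + ((p : A) ^ f) ^ p * θ x = 0 := by
    rw [← h.psi_def x, ← hθc, ← h.theta_mul, hx, theta_zero' hp h]
  have F2 : ((p : A) ^ f) ^ p = (p : A) ^ f + (p : A) * (m : A) := by
    have : (((p ^ f) ^ p : ℕ) : A) = ((p ^ f + p * m : ℕ) : A) := by exact_mod_cast congrArg _ hm1
    push_cast at this
    exact this
  have F3 : (m : A) + (p : A) ^ (f - 1) = (p : A) ^ (f * p - 1) := by
    have : ((m + p ^ (f - 1) : ℕ) : A) = ((p ^ (f * p - 1) : ℕ) : A) := by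
      exact_mod_cast congrArg _ hmm
    push_cast at this
    exact this
  linear_combination h0 - θ x * F2 - x ^ p * F3 - hbig

lemma theta_pow' (h : IsThetaRing p θ ψ) (a : A) (n : ℕ) :
    θ (a ^ (n + 1)) = θ a * ∑ i ∈ Finset.range (n + 1), a ^ (p * i) * (ψ a) ^ (n - i) := by
  induction n with
  | zero => simp
  | succ n ih =>
    have e1 : a ^ (n + 2) = a * a ^ (n + 1) := by ring
    rw [e1, h.theta_mul, psi_pow' h, ih,
      Finset.sum_range_succ' (fun i => a ^ (p * i) * (ψ a) ^ (n + 1 - i)) (n + 1)]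
    simp only [Nat.succ_sub_succ, Nat.mul_zero, pow_zero, one_mul, Nat.sub_zero]
    have hs : ∑ i ∈ Finset.range (n + 1), a ^ (p * (i + 1)) * ψ a ^ (n - i)
        = a ^ p * ∑ i ∈ Finset.range (n + 1), a ^ (p * i) * ψ a ^ (n - i) := by
      rw [Finset.mul_sum]
      refine Finset.sum_congr rfl fun i _ => ?_
      rw [Nat.mul_add, Nat.mul_one, pow_add]; ring
    rw [hs]
    ring

lemma psi_tors' (hp : p.Prime) (h : IsThetaRing p θ ψ) {e : ℕ} (he : 1 ≤ e) (a : A)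
    (ha : (p : A) ^ e * a = 0) : (p : A) ^ (e - 1) * ψ a = 0 := by
  have hrel := rel' hp h he a ha
  have hP : (p : A) ^ e = (p : A) ^ (e - 1) * (p : A) := by
    rw [← pow_succ]; congr 1; omega
  rw [h.psi_def]
  linear_combination -hrel + θ a * hP

lemma key' (hp : p.Prime) (h : IsThetaRing p θ ψ) :
    ∀ e, ∀ a : A, (p : A) ^ e * a = 0 → ∀ t, 1 ≤ t → t ≤ e →
      (p : A) ^ (e - t) * a ^ (p ^ t + p ^ (t - 1)) = 0 := by
  intro e
  induction e using Nat.strong_induction_on with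
  | _ e IH =>
    intro a ha t
    induction t with
    | zero => exact fun h1 _ => absurd h1 (by omega)
    | succ t IHt =>
      intro _ hte
      have hp2 := hp.two_le
      by_cases ht : t = 0
      · subst ht
        have he1 : 1 ≤ e := hte
        have hrel := rel' hp h he1 a ha
        have goal1 : (p : A) ^ (e - 1) * a ^ (p + 1) = 0 :=
          calc (p : A) ^ (e - 1) * a ^ (p + 1)
            = ((p : A) ^ (e - 1) * a ^ p) * a := by rw [pow_succ]; ring
          _ = ((p : A) ^ e * θ a) * a := by rw [hrel]
          _ = θ a * ((p : A) ^ e * a) := by ring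
          _ = 0 := by rw [ha, mul_zero]
        simpa using goal1
      · have ht1 : 1 ≤ t := Nat.one_le_iff_ne_zero.mpr ht
        set s := p ^ t + p ^ (t - 1) with hs_def
        have hs1 : 1 ≤ s := by have := pow_pos hp.pos t; omega
        obtain ⟨n, hn⟩ : ∃ n, s = n + 1 := ⟨s - 1, by omega⟩
        have hs : (p : A) ^ (e - t) * a ^ s = 0 := IHt ht1 (by omega)
        have hf1 : 1 ≤ e - t := by omega
        have hrel := rel' hp h hf1 (a ^ s) hs
        -- torsion of ψ a to the appropriate power
        have hψ1 : (p : A) ^ (e - 1) * ψ a = 0 := psi_tors' hp h (by omega) a ha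
        -- choose c with (p:A)^(e-t) * (ψ a)^c = 0 and the bound c + i ≤ n for small i
        have hcore : ∃ c : ℕ, (p : A) ^ (e - t) * (ψ a) ^ c = 0 ∧
            ∀ i : ℕ, p * i ≤ n → c + i ≤ n := by
          by_cases ht2 : t = 1
          · subst ht2
            refine ⟨1, by simpa using hψ1, fun i hi => ?_⟩
            -- n = p here : s = p + 1
            have hn' : n = p := by simp [hs_def] at hn; omega
            subst hn'
            -- p*i ≤ p → i ≤ 1 → 1 + i ≤ p
            nlinarith
          · have ht2' : 2 ≤ t := by omega
            have hcψ := IH (e - 1) (by omega) (ψ a) hψ1 (t - 1) (by omega) (by omega)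
            have hee : e - 1 - (t - 1) = e - t := by omega
            rw [hee] at hcψ
            refine ⟨p ^ (t - 1) + p ^ (t - 2), hcψ, fun i hi => ?_⟩
            -- arithmetic: p*i ≤ n, n + 1 = p^t + p^(t-1)
            have hq1 : p ^ (t - 1) = p ^ (t - 2) * p := by rw [← pow_succ]; congr 1; omega
            have hq2 : p ^ t = p ^ (t - 2) * p * p := by rw [← pow_succ, ← pow_succ]; congr 1; omega
            set q := p ^ (t - 2) with hq
            have hqpos : 1 ≤ q := Nat.one_le_iff_ne_zero.mpr (pow_ne_zero _ hp.pos.ne')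
            have hn2 : n + 1 = q * p * p + q * p := by rw [hn] at hs_def; omega
            have hilt : i < q * p + q := by
              have : p * i < p * (q * p + q) := by nlinarith
              exact Nat.lt_of_mul_lt_mul_left this
            nlinarith
        obtain ⟨c, hψc, hbound⟩ := hcore
        -- the sum vanishes
        have hterm : ∀ i ∈ Finset.range (n + 1),
            (p : A) ^ (e - t) * (a ^ (p * i) * (ψ a) ^ (n - i)) = 0 := by
          intro i hi
          by_cases hbig : n + 1 ≤ p * i
          · have e1 : a ^ (p * i) = a ^ s * a ^ (p * i - s) := by
              rw [← pow_add]; congr 1; omega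
            rw [e1]
            calc (p : A) ^ (e - t) * (a ^ s * a ^ (p * i - s) * ψ a ^ (n - i))
                = (a ^ (p * i - s) * ψ a ^ (n - i)) * ((p : A) ^ (e - t) * a ^ s) := by ring
              _ = 0 := by rw [hs, mul_zero]
          · have hsmall : p * i ≤ n := by omega
            have hci : c + i ≤ n := hbound i hsmall
            have e2 : (ψ a) ^ (n - i) = (ψ a) ^ c * (ψ a) ^ (n - i - c) := by
              rw [← pow_add]; congr 1; omega
            rw [e2]
            calc (p : A) ^ (e - t) * (a ^ (p * i) * (ψ a ^ c * ψ a ^ (n - i - c)))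
                = (a ^ (p * i) * ψ a ^ (n - i - c)) * ((p : A) ^ (e - t) * ψ a ^ c) := by ring
              _ = 0 := by rw [hψc, mul_zero]
        have hsum : (p : A) ^ (e - t) * θ (a ^ s) = 0 := by
          rw [hn, theta_pow' h a n]
          calc (p : A) ^ (e - t) * (θ a * ∑ i ∈ Finset.range (n + 1), a ^ (p * i) * ψ a ^ (n - i))
              = θ a * ∑ i ∈ Finset.range (n + 1),
                  (p : A) ^ (e - t) * (a ^ (p * i) * ψ a ^ (n - i)) := by
                rw [Finset.mul_sum, Finset.mul_sum, Finset.mul_sum]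
                exact Finset.sum_congr rfl fun i _ => by ring
            _ = 0 := by rw [Finset.sum_eq_zero hterm, mul_zero]
        -- conclude
        have hfinal : (p : A) ^ (e - t - 1) * (a ^ s) ^ p = 0 := by
          rw [← hrel]; exact hsum
        have hexp2 : p ^ (t + 1) + p ^ (t + 1 - 1) = s * p := by
          simp only [Nat.add_sub_cancel]
          have h1 : p ^ (t - 1) * p = p ^ t := by rw [← pow_succ]; congr 1; omega
          have h2 : p ^ t * p = p ^ (t + 1) := by rw [← pow_succ]
          rw [hs_def, Nat.add_mul, h1, h2]
        have hexp3 : e - (t + 1) = e - t - 1 := by omega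
        rw [hexp2, hexp3, pow_mul]
        exact hfinal

end Aux2


/-- If `p^e · a = 0` in a `θ^p`-ring then `a^{p^e + p^{e-1}} = 0`. -/
theorem pow_eq_zero_of_p_pow_torsion (p : ℕ) (hp : p.Prime) (A : Type*) [CommRing A]
    (θ ψ : A → A) (h : IsThetaRing p θ ψ) (e : ℕ) (he : 1 ≤ e) (a : A)
    (ha : (p : A) ^ e * a = 0) :
    a ^ (p ^ e + p ^ (e - 1)) = 0 := by

  have := key' hp h e a ha e he le_rfl
  simpa using this
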